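/- Let A be a real m×n matrix with singular value decomposition A = U Σ Vᵀ, where U ∈ ℝ^{m×m} and V ∈ ℝ^{n×n} are orthogonal and Σ ∈ ℝ^{m×n} has the singular values σ₁, σ₂, … of A on its diagonal and zeros elsewhere. For ε > 0 define the singular value soft thresholding S_ε(A) = U Σ_ε Vᵀ, where Σ_ε is obtained from Σ by replacing each diagonal entry σ_i with max(σ_i − ε, 0). Then for any η > 0 and ρ > 0, the matrix X* = S_{η/ρ}(A) minimizes the function X ↦ η ‖X‖_* + (ρ/2) ‖X − A‖_F² over all real m×n matrices X: for every X ∈ ℝ^{m×n}, η ‖X*‖_* + (ρ/2) ‖X* − A‖_F² ≤ η ‖X‖_* + (ρ/2) ‖X − A‖_F². -/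

import Mathlib

open Matrix

/-- Nuclear norm: trace of the psd square root of `Aᵀ * A`. -/
noncomputable def nuclearNorm {m n : Type*} [Fintype m] [Fintype n] [DecidableEq n]
    (A : Matrix m n ℝ) : ℝ :=
  ((((Matrix.posSemidef_conjTranspose_mul_self A).1.eigenvectorUnitary : Matrix n n ℝ) *
    diagonal ((RCLike.ofReal : ℝ → ℝ) ∘ (√·) ∘ (Matrix.posSemidef_conjTranspose_mul_self A).1.eigenvalues) *
    (star (Matrix.posSemidef_conjTranspose_mul_self A).1.eigenvectorUnitary : Matrix n n ℝ))).trace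

noncomputable def Matrix.PosSemidef.sqrt {n : Type*} [Fintype n] [DecidableEq n]
    {M : Matrix n n ℝ} (hM : M.PosSemidef) : Matrix n n ℝ :=
  (hM.1.eigenvectorUnitary : Matrix n n ℝ) *
    diagonal ((RCLike.ofReal : ℝ → ℝ) ∘ (√·) ∘ hM.1.eigenvalues) *
    (star hM.1.eigenvectorUnitary : Matrix n n ℝ)

lemma nuclearNorm_eq {m n : Type*} [Fintype m] [Fintype n] [DecidableEq n]
    (A : Matrix m n ℝ) :
    nuclearNorm A = (Matrix.posSemidef_conjTranspose_mul_self A).sqrt.trace := rfl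

section
open scoped MatrixOrder

lemma Matrix.PosSemidef.sqrt_eq_cfc {n : Type*} [Fintype n] [DecidableEq n]
    {M : Matrix n n ℝ} (hM : M.PosSemidef) : hM.sqrt = CFC.sqrt M := by
  rw [CFC.sqrt_eq_cfc, cfc_nnreal_eq_real _ M, hM.1.cfc_eq, IsHermitian.cfc,
    Unitary.conjStarAlgAut_apply, Matrix.PosSemidef.sqrt]
  unfold Real.sqrt
  rfl

lemma Matrix.PosSemidef.posSemidef_sqrt {n : Type*} [Fintype n] [DecidableEq n]
    {M : Matrix n n ℝ} (hM : M.PosSemidef) : hM.sqrt.PosSemidef := by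
  rw [hM.sqrt_eq_cfc]; exact (CFC.sqrt_nonneg M).posSemidef

lemma Matrix.PosSemidef.sqrt_mul_self {n : Type*} [Fintype n] [DecidableEq n]
    {M : Matrix n n ℝ} (hM : M.PosSemidef) : hM.sqrt * hM.sqrt = M := by
  rw [hM.sqrt_eq_cfc]; exact CFC.sqrt_mul_sqrt_self M hM.nonneg

lemma Matrix.PosSemidef.eq_sqrt_of_sq_eq {n : Type*} [Fintype n] [DecidableEq n]
    {S M : Matrix n n ℝ} (hS : S.PosSemidef) (hM : M.PosSemidef) (h : S ^ 2 = M) :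
    S = hM.sqrt := by
  rw [hM.sqrt_eq_cfc]; exact (CFC.sqrt_unique (by rw [← h, pow_two]) hS.nonneg).symm

end

/-- Frobenius norm of a real matrix. -/
noncomputable def frobNorm {m n : Type*} [Fintype m] [Fintype n]
    (A : Matrix m n ℝ) : ℝ :=
  Real.sqrt (∑ i, ∑ j, (A i j) ^ 2)

lemma trace_hmul {m n : Type*} [Fintype m] [Fintype n] (B C : Matrix m n ℝ) :
    trace (Bᴴ * C) = ∑ i, ∑ j, B i j * C i j := by
  simp [trace, mul_apply, conjTranspose_apply, diag]
  exact Finset.sum_comm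

lemma dual_le_nuclear {m n : Type*} [Fintype m] [Fintype n] [DecidableEq n]
    (Y W : Matrix m n ℝ)
    (hW : ∀ x : n → ℝ, ∑ i, (W *ᵥ x) i ^ 2 ≤ ∑ j, x j ^ 2) :
    ∑ i, ∑ j, W i j * Y i j ≤ nuclearNorm Y := by
  have hM : (Yᴴ * Y).PosSemidef := Matrix.posSemidef_conjTranspose_mul_self Y
  set Q : Matrix n n ℝ := (hM.1.eigenvectorUnitary : Matrix n n ℝ) with hQ
  have hQ1 : star Q * Q = 1 := Unitary.coe_star_mul_self hM.1.eigenvectorUnitary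
  have hQ1' : Q * star Q = 1 := Unitary.coe_mul_star_self hM.1.eigenvectorUnitary
  have hnuc : nuclearNorm Y = ∑ j, Real.sqrt (hM.1.eigenvalues j) := by
    rw [nuclearNorm_eq, Matrix.PosSemidef.sqrt, trace_mul_cycle]
    rw [Unitary.coe_star_mul_self, one_mul, trace_diagonal]
    simp
  have h1 : ∑ i, ∑ j, W i j * Y i j = trace ((W * Q)ᴴ * (Y * Q)) := by
    have e : (W * Q)ᴴ * (Y * Q) = Qᴴ * (Wᴴ * Y) * Q := by
      rw [conjTranspose_mul]; simp only [Matrix.mul_assoc]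
    rw [e, ← star_eq_conjTranspose Q, trace_mul_cycle, hQ1', one_mul, trace_hmul]
  rw [h1, trace_hmul, Finset.sum_comm, hnuc]
  have hdiag : Qᴴ * (Yᴴ * Y) * Q = diagonal (RCLike.ofReal ∘ hM.1.eigenvalues) := by
    rw [← star_eq_conjTranspose]
    have h := hM.1.conjStarAlgAut_star_eigenvectorUnitary
    rw [Unitary.conjStarAlgAut_apply, Unitary.coe_star, star_star] at h
    exact h
  apply Finset.sum_le_sum
  intro j _
  set q : n → ℝ := fun i => Q i j with hq
  have hWQ : ∀ i, (W * Q) i j = (W *ᵥ q) i := fun i => by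
    simp [mul_apply, mulVec, dotProduct, hq]
  have hYQ : ∀ i, (Y * Q) i j = (Y *ᵥ q) i := fun i => by
    simp [mul_apply, mulVec, dotProduct, hq]
  have hb : ∑ i, ((Y *ᵥ q) i) ^ 2 = hM.1.eigenvalues j := by
    have e0 : Qᴴ * (Yᴴ * Y) * Q = (Y * Q)ᴴ * (Y * Q) := by
      rw [conjTranspose_mul]; simp only [Matrix.mul_assoc]
    have e1 : ((Y * Q)ᴴ * (Y * Q)) j j = ∑ i, ((Y * Q) i j) ^ 2 := by
      set B := Y * Q with hB
      simp [mul_apply, conjTranspose_apply, pow_two]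
    have e2 := e0.symm.trans hdiag
    rw [e2] at e1
    have e3 : ∑ i, ((Y * Q) i j) ^ 2 = ∑ i, ((Y *ᵥ q) i) ^ 2 :=
      Finset.sum_congr rfl fun i _ => by rw [hYQ]
    rw [← e3]
    rw [← e1]
    simp
  have hqn : ∑ i, q i ^ 2 = 1 := by
    have e1 : (star Q * Q) j j = ∑ i, q i ^ 2 := by
      simp [mul_apply, conjTranspose_apply, hq, pow_two]
    rw [hQ1] at e1
    simpa using e1.symm
  have ha : ∑ i, ((W *ᵥ q) i) ^ 2 ≤ 1 := by
    have := hW q; rw [hqn] at this; exact this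
  have hb0 : (0:ℝ) ≤ ∑ i, ((Y *ᵥ q) i) ^ 2 := Finset.sum_nonneg fun i _ => sq_nonneg _
  calc ∑ i, (W * Q) i j * (Y * Q) i j
      = ∑ i, (W *ᵥ q) i * (Y *ᵥ q) i :=
        Finset.sum_congr rfl fun i _ => by rw [hWQ, hYQ]
    _ ≤ Real.sqrt ((∑ i, (W *ᵥ q) i * (Y *ᵥ q) i) ^ 2) := by
        rw [Real.sqrt_sq_eq_abs]; exact le_abs_self _
    _ ≤ Real.sqrt (hM.1.eigenvalues j) := by
        apply Real.sqrt_le_sqrt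
        calc (∑ i, (W *ᵥ q) i * (Y *ᵥ q) i) ^ 2
            ≤ (∑ i, ((W *ᵥ q) i) ^ 2) * ∑ i, ((Y *ᵥ q) i) ^ 2 :=
              Finset.sum_mul_sq_le_sq_mul_sq _ _ _
          _ ≤ 1 * ∑ i, ((Y *ᵥ q) i) ^ 2 := by
              exact mul_le_mul_of_nonneg_right ha hb0
          _ = hM.1.eigenvalues j := by rw [one_mul, hb]

lemma sum_sq_trace {m n : Type*} [Fintype m] [Fintype n] (B : Matrix m n ℝ) :
    ∑ i, ∑ j, B i j ^ 2 = trace (Bᴴ * B) := by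
  rw [trace_hmul]
  exact Finset.sum_congr rfl fun i _ => Finset.sum_congr rfl fun j _ => by rw [pow_two]

lemma conj_prod {m n : Type*} [Fintype m] [Fintype n] [DecidableEq m]
    (U : Matrix m m ℝ) (V : Matrix n n ℝ) (Y : Matrix m n ℝ) (hU : Uᴴ * U = 1) :
    (U * Y * Vᴴ)ᴴ * (U * Y * Vᴴ) = V * (Yᴴ * Y) * Vᴴ := by
  rw [conjTranspose_mul, conjTranspose_mul, conjTranspose_conjTranspose]
  simp only [Matrix.mul_assoc]
  rw [← Matrix.mul_assoc Uᴴ U, hU, Matrix.one_mul]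

lemma nuclear_conj {m n : Type*} [Fintype m] [Fintype n] [DecidableEq m] [DecidableEq n]
    (U : Matrix m m ℝ) (V : Matrix n n ℝ) (Y : Matrix m n ℝ)
    (hU : Uᴴ * U = 1) (hV : Vᴴ * V = 1) :
    nuclearNorm (U * Y * Vᴴ) = nuclearNorm Y := by
  have hM := Matrix.posSemidef_conjTranspose_mul_self Y
  have hM' := Matrix.posSemidef_conjTranspose_mul_self (U * Y * Vᴴ)
  set S := hM.sqrt with hS
  have hT : (V * S * Vᴴ).PosSemidef := hM.posSemidef_sqrt.mul_mul_conjTranspose_same V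
  have hTsq : (V * S * Vᴴ) ^ 2 = (U * Y * Vᴴ)ᴴ * (U * Y * Vᴴ) := by
    rw [conj_prod U V Y hU, pow_two, ← hM.sqrt_mul_self]
    simp only [Matrix.mul_assoc]
    rw [← Matrix.mul_assoc Vᴴ V, hV, Matrix.one_mul]
  have heq : V * S * Vᴴ = hM'.sqrt := hT.eq_sqrt_of_sq_eq hM' hTsq
  rw [nuclearNorm_eq, nuclearNorm_eq, ← heq, trace_mul_cycle, hV, Matrix.one_mul]

lemma sum_sq_conj {m n : Type*} [Fintype m] [Fintype n] [DecidableEq m] [DecidableEq n]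
    (U : Matrix m m ℝ) (V : Matrix n n ℝ) (Y : Matrix m n ℝ)
    (hU : Uᴴ * U = 1) (hV : Vᴴ * V = 1) :
    ∑ i, ∑ j, ((U * Y * Vᴴ) i j) ^ 2 = ∑ i, ∑ j, (Y i j) ^ 2 := by
  rw [sum_sq_trace, sum_sq_trace, conj_prod U V Y hU, trace_mul_cycle, hV, Matrix.one_mul]

lemma nuclear_diag {m n : ℕ} (D : Matrix (Fin m) (Fin n) ℝ)
    (hoff : ∀ (i : Fin m) (j : Fin n), (i : ℕ) ≠ (j : ℕ) → D i j = 0)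
    (hnn : ∀ (i : Fin m) (j : Fin n), 0 ≤ D i j) :
    nuclearNorm D = ∑ i, ∑ j, D i j := by
  have hM := Matrix.posSemidef_conjTranspose_mul_self D
  have hDD : Dᴴ * D = diagonal (fun j => ∑ i, D i j ^ 2) := by
    ext j k
    rcases eq_or_ne j k with rfl | h
    · simp [mul_apply, conjTranspose_apply, pow_two]
    · simp only [mul_apply, conjTranspose_apply, diagonal_apply_ne _ h, star_trivial]
      apply Finset.sum_eq_zero; intro i _
      rcases eq_or_ne (i : ℕ) (j : ℕ) with hij | hij
      · have : (i : ℕ) ≠ (k : ℕ) := fun hc => h (Fin.ext (hij.symm.trans hc))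
        rw [hoff i k this, mul_zero]
      · rw [hoff i j hij, zero_mul]
  set S := diagonal (fun j => Real.sqrt (∑ i, D i j ^ 2)) with hSdef
  have hS : S.PosSemidef := posSemidef_diagonal_iff.mpr fun j => Real.sqrt_nonneg _
  have hsq : S ^ 2 = Dᴴ * D := by
    rw [hDD, pow_two, hSdef, diagonal_mul_diagonal]
    refine congrArg _ (funext fun j => ?_)
    exact Real.mul_self_sqrt (Finset.sum_nonneg fun i _ => sq_nonneg _)
  have heq : S = hM.sqrt := hS.eq_sqrt_of_sq_eq hM hsq
  rw [nuclearNorm_eq, ← heq, hSdef, trace_diagonal,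
    Finset.sum_comm (f := fun (i : Fin m) (j : Fin n) => D i j)]
  apply Finset.sum_congr rfl
  intro j _
  by_cases h : (j : ℕ) < m
  · set i0 : Fin m := ⟨(j : ℕ), h⟩ with hi0
    have hz : ∀ i : Fin m, i ≠ i0 → D i j = 0 := fun i hi =>
      hoff i j (fun hc => hi (Fin.ext (by simp [hi0, hc])))
    have e1 : ∑ i, D i j ^ 2 = D i0 j ^ 2 :=
      Finset.sum_eq_single i0 (fun i _ hi => by rw [hz i hi]; ring) (by simp)
    have e2 : ∑ i, D i j = D i0 j :=
      Finset.sum_eq_single i0 (fun i _ hi => hz i hi) (by simp)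
    rw [e1, e2, Real.sqrt_sq (hnn i0 j)]
  · have hz : ∀ i : Fin m, D i j = 0 := fun i => hoff i j (by omega)
    simp [hz]

lemma diag_case {m n : ℕ} (η ρ : ℝ) (hη : 0 < η) (hρ : 0 < ρ)
    (Sig : Matrix (Fin m) (Fin n) ℝ)
    (hoff : ∀ (i : Fin m) (j : Fin n), (i : ℕ) ≠ (j : ℕ) → Sig i j = 0)
    (hnonneg : ∀ (i : Fin m) (j : Fin n), (i : ℕ) = (j : ℕ) → 0 ≤ Sig i j)
    (E : Matrix (Fin m) (Fin n) ℝ)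
    (hE : E = Matrix.of fun (i : Fin m) (j : Fin n) =>
      if (i : ℕ) = (j : ℕ) then max (Sig i j - η / ρ) 0 else 0)
    (Y : Matrix (Fin m) (Fin n) ℝ) :
    η * nuclearNorm E + ρ / 2 * ∑ i, ∑ j, (E i j - Sig i j) ^ 2 ≤
    η * nuclearNorm Y + ρ / 2 * ∑ i, ∑ j, (Y i j - Sig i j) ^ 2 := by
  set ε := η / ρ with hεdef
  have hε : 0 < ε := div_pos hη hρ
  have hρη : ρ * ε = η := by rw [hεdef]; field_simp
  set W : Matrix (Fin m) (Fin n) ℝ :=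
    Matrix.of (fun (i : Fin m) (j : Fin n) =>
      if (i : ℕ) = (j : ℕ) then min (Sig i j) ε / ε else 0) with hWdef
  have hWrange : ∀ i j, 0 ≤ W i j ∧ W i j ≤ 1 := by
    intro i j
    simp only [hWdef, of_apply]
    split
    · next h =>
      refine ⟨div_nonneg (le_min (hnonneg i j h) hε.le) hε.le, ?_⟩
      rw [div_le_one hε]
      exact min_le_right _ _
    · exact ⟨le_refl 0, zero_le_one⟩
  have f1 : ∀ i j, ρ * (Sig i j - E i j) = η * W i j := by
    intro i j
    simp only [hE, hWdef, of_apply]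
    rcases eq_or_ne (i : ℕ) (j : ℕ) with h | h
    · simp only [if_pos h]
      have hσ := hnonneg i j h
      rcases le_total (Sig i j) ε with hc | hc
      · rw [max_eq_right (by linarith), min_eq_left hc, sub_zero, mul_div_assoc',
          eq_div_iff hε.ne']
        linear_combination (Sig i j) * hρη
      · rw [max_eq_left (by linarith), min_eq_right hc, div_self hε.ne', mul_one]
        linear_combination hρη
    · simp [if_neg h, hoff i j h]
  have f2 : ∀ i j, W i j * E i j = E i j := by
    intro i j
    simp only [hE, hWdef, of_apply]
    rcases eq_or_ne (i : ℕ) (j : ℕ) with h | h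
    · simp only [if_pos h]
      rcases le_total (Sig i j) ε with hc | hc
      · rw [max_eq_right (by linarith), mul_zero]
      · rw [min_eq_right hc, div_self hε.ne', one_mul]
    · rw [if_neg h, if_neg h, mul_zero]
  have f4 : nuclearNorm E = ∑ i, ∑ j, E i j := by
    apply nuclear_diag
    · intro i j h; simp [hE, if_neg h]
    · intro i j; simp only [hE, of_apply]; split
      · exact le_max_right _ _
      · exact le_refl 0
  have f3 : ∀ x : Fin n → ℝ, ∑ i, (W *ᵥ x) i ^ 2 ≤ ∑ j, x j ^ 2 := by
    intro x
    have hterm : ∀ i : Fin m, (W *ᵥ x) i ^ 2 ≤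
        (if h : (i : ℕ) < n then x ⟨(i : ℕ), h⟩ ^ 2 else 0) := by
      intro i
      by_cases h : (i : ℕ) < n
      · rw [dif_pos h]
        have hv : (W *ᵥ x) i = W i ⟨(i : ℕ), h⟩ * x ⟨(i : ℕ), h⟩ := by
          rw [mulVec, dotProduct]
          apply Finset.sum_eq_single
          · intro j _ hj
            have hij : (i : ℕ) ≠ (j : ℕ) := fun hc => hj (Fin.ext (by simp [← hc]))
            simp [hWdef, if_neg hij]
          · simp
        rw [hv, mul_pow]
        have hr := hWrange i ⟨(i : ℕ), h⟩
        have h1 : W i ⟨(i : ℕ), h⟩ ^ 2 ≤ 1 := pow_le_one₀ hr.1 hr.2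
        calc W i ⟨(i : ℕ), h⟩ ^ 2 * x ⟨(i : ℕ), h⟩ ^ 2
            ≤ 1 * x ⟨(i : ℕ), h⟩ ^ 2 := mul_le_mul_of_nonneg_right h1 (sq_nonneg _)
          _ = x ⟨(i : ℕ), h⟩ ^ 2 := one_mul _
      · rw [dif_neg h]
        have hv : (W *ᵥ x) i = 0 := by
          rw [mulVec, dotProduct]
          apply Finset.sum_eq_zero
          intro j _
          have hij : (i : ℕ) ≠ (j : ℕ) := by omega
          simp [hWdef, if_neg hij]
        rw [hv]
        simp
    set G : ℕ → ℝ := fun k => if h : k < n then x ⟨k, h⟩ ^ 2 else 0 with hG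
    have hG0 : ∀ k, 0 ≤ G k := by
      intro k; simp only [hG]; split
      · exact sq_nonneg _
      · exact le_refl 0
    calc ∑ i, (W *ᵥ x) i ^ 2 ≤ ∑ i : Fin m, G (i : ℕ) :=
          Finset.sum_le_sum fun i _ => hterm i
      _ = ∑ k ∈ Finset.range m, G k := Fin.sum_univ_eq_sum_range G m
      _ ≤ ∑ k ∈ Finset.range n, G k := by
          have h1 : ∑ k ∈ Finset.range m, G k = ∑ k ∈ Finset.range (min m n), G k := by
            refine (Finset.sum_subset (Finset.range_subset_range.mpr (min_le_left m n)) ?_).symm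
            intro k hk hk'
            simp only [Finset.mem_range] at hk hk'
            simp only [hG]
            rw [dif_neg (by omega)]
          rw [h1]
          exact Finset.sum_le_sum_of_subset_of_nonneg
            (Finset.range_subset_range.mpr (min_le_right m n)) (fun k _ _ => hG0 k)
      _ = ∑ j : Fin n, x j ^ 2 := by
          rw [← Fin.sum_univ_eq_sum_range G n]
          apply Finset.sum_congr rfl
          intro j _
          simp only [hG]
          rw [dif_pos j.isLt]
    -- done
  have f6 : ∑ i, ∑ j, W i j * Y i j ≤ nuclearNorm Y := dual_le_nuclear Y W f3
  have key : ∀ i j, ρ/2 * (Y i j - Sig i j) ^ 2 =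
      ρ/2 * (E i j - Sig i j) ^ 2 + ρ/2 * (Y i j - E i j) ^ 2
        + η * (W i j * E i j) - η * (W i j * Y i j) := by
    intro i j
    linear_combination (E i j - Y i j) * f1 i j
  have hsum : ρ/2 * (∑ i, ∑ j, (Y i j - Sig i j) ^ 2) =
      ρ/2 * (∑ i, ∑ j, (E i j - Sig i j) ^ 2) + ρ/2 * (∑ i, ∑ j, (Y i j - E i j) ^ 2)
        + η * (∑ i, ∑ j, W i j * E i j) - η * (∑ i, ∑ j, W i j * Y i j) := by
    simp only [Finset.mul_sum]
    rw [← Finset.sum_add_distrib, ← Finset.sum_add_distrib, ← Finset.sum_sub_distrib]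
    apply Finset.sum_congr rfl
    intro i _
    rw [← Finset.sum_add_distrib, ← Finset.sum_add_distrib, ← Finset.sum_sub_distrib]
    exact Finset.sum_congr rfl fun j _ => key i j
  have hWE : ∑ i, ∑ j, W i j * E i j = ∑ i, ∑ j, E i j :=
    Finset.sum_congr rfl fun i _ => Finset.sum_congr rfl fun j _ => f2 i j
  have hYE : (0:ℝ) ≤ ∑ i, ∑ j, (Y i j - E i j) ^ 2 :=
    Finset.sum_nonneg fun i _ => Finset.sum_nonneg fun j _ => sq_nonneg _
  have hf6 : η * (∑ i, ∑ j, W i j * Y i j) ≤ η * nuclearNorm Y :=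
    mul_le_mul_of_nonneg_left f6 hη.le
  have hρ2 : (0:ℝ) ≤ ρ/2 * (∑ i, ∑ j, (Y i j - E i j) ^ 2) :=
    mul_nonneg (by positivity) hYE
  have hWE' : η * (∑ i, ∑ j, W i j * E i j) = η * (∑ i, ∑ j, E i j) := by rw [hWE]
  have f4' : η * nuclearNorm E = η * (∑ i, ∑ j, E i j) := by rw [f4]
  linarith [hsum, hWE', f4', hf6, hρ2]


/-- **Singular value soft thresholding solves the nuclear-norm proximal problem**:
if `A = U Σ Vᵀ` is an SVD and `X* = U Σ_{η/ρ} Vᵀ` where `Σ_{η/ρ}` soft-thresholds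
the diagonal of `Σ` at level `η/ρ`, then `X*` minimizes
`X ↦ η‖X‖_* + (ρ/2)‖X − A‖_F²`. -/
theorem soft_thresholding_minimizes (m n : ℕ) (η ρ : ℝ) (hη : 0 < η) (hρ : 0 < ρ)
    (A : Matrix (Fin m) (Fin n) ℝ)
    (U : Matrix (Fin m) (Fin m) ℝ) (V : Matrix (Fin n) (Fin n) ℝ)
    (Sig : Matrix (Fin m) (Fin n) ℝ)
    (hU : Uᵀ * U = 1) (hU' : U * Uᵀ = 1)
    (hV : Vᵀ * V = 1) (hV' : V * Vᵀ = 1)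
    (hSVD : A = U * Sig * Vᵀ)
    (hoff : ∀ (i : Fin m) (j : Fin n), (i : ℕ) ≠ (j : ℕ) → Sig i j = 0)
    (hnonneg : ∀ (i : Fin m) (j : Fin n), (i : ℕ) = (j : ℕ) → 0 ≤ Sig i j)
    (Xstar : Matrix (Fin m) (Fin n) ℝ)
    (hXstar : Xstar = U * (Matrix.of fun (i : Fin m) (j : Fin n) =>
      if (i : ℕ) = (j : ℕ) then max (Sig i j - η / ρ) 0 else 0) * Vᵀ) :
    ∀ X : Matrix (Fin m) (Fin n) ℝ,
      η * nuclearNorm Xstar + ρ / 2 * frobNorm (Xstar - A) ^ 2 ≤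
      η * nuclearNorm X + ρ / 2 * frobNorm (X - A) ^ 2 := by
  intro X
  have hUH : Uᴴ * U = 1 := by rwa [conjTranspose_eq_transpose_of_trivial]
  have hU'H : U * Uᴴ = 1 := by rwa [conjTranspose_eq_transpose_of_trivial]
  have hVH : Vᴴ * V = 1 := by rwa [conjTranspose_eq_transpose_of_trivial]
  have hV'H : V * Vᴴ = 1 := by rwa [conjTranspose_eq_transpose_of_trivial]
  set E : Matrix (Fin m) (Fin n) ℝ := Matrix.of fun (i : Fin m) (j : Fin n) =>
      if (i : ℕ) = (j : ℕ) then max (Sig i j - η / ρ) 0 else 0 with hEdef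
  have hXs : Xstar = U * E * Vᴴ := by
    rw [hXstar, conjTranspose_eq_transpose_of_trivial]
  have hA : A = U * Sig * Vᴴ := by
    rw [hSVD, conjTranspose_eq_transpose_of_trivial]
  set Y : Matrix (Fin m) (Fin n) ℝ := Uᴴ * X * V with hYdef
  have hXY : X = U * Y * Vᴴ := by
    rw [hYdef]
    have e : U * (Uᴴ * X * V) * Vᴴ = U * Uᴴ * (X * (V * Vᴴ)) := by
      simp only [Matrix.mul_assoc]
    rw [e, hU'H, hV'H, Matrix.one_mul, Matrix.mul_one]
  have hn1 : nuclearNorm Xstar = nuclearNorm E := by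
    rw [hXs]; exact nuclear_conj U V E hUH hVH
  have hn2 : nuclearNorm X = nuclearNorm Y := by
    conv_lhs => rw [hXY]
    exact nuclear_conj U V Y hUH hVH
  have frob_sq : ∀ B : Matrix (Fin m) (Fin n) ℝ,
      frobNorm B ^ 2 = ∑ i, ∑ j, (B i j) ^ 2 := fun B =>
    Real.sq_sqrt (Finset.sum_nonneg fun i _ => Finset.sum_nonneg fun j _ => sq_nonneg _)
  have hf1 : frobNorm (Xstar - A) ^ 2 = ∑ i, ∑ j, (E i j - Sig i j) ^ 2 := by
    have hd : Xstar - A = U * (E - Sig) * Vᴴ := by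
      rw [hXs, hA, Matrix.mul_sub, Matrix.sub_mul]
    rw [hd, frob_sq, sum_sq_conj U V _ hUH hVH]
    exact Finset.sum_congr rfl fun i _ => Finset.sum_congr rfl fun j _ => by
      rw [Matrix.sub_apply]
  have hf2 : frobNorm (X - A) ^ 2 = ∑ i, ∑ j, (Y i j - Sig i j) ^ 2 := by
    have hd : X - A = U * (Y - Sig) * Vᴴ := by
      conv_lhs => rw [hXY, hA]
      rw [Matrix.mul_sub, Matrix.sub_mul]
    rw [hd, frob_sq, sum_sq_conj U V _ hUH hVH]
    exact Finset.sum_congr rfl fun i _ => Finset.sum_congr rfl fun j _ => by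
      rw [Matrix.sub_apply]
  rw [hn1, hn2, hf1, hf2]
  exact diag_case η ρ hη hρ Sig hoff hnonneg E hEdef Y
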